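/- Let R be an integral domain that is bounded, i.e. for every nonzero a ∈ R there is a natural number n such that in any factorization a = a₀ a₁ ⋯ aₙ into n+1 factors, at least one factor aᵢ is a unit. Then the polynomial ring R[X] is bounded in the same sense. -/

import Mathlib

lemma bounded_list_aux {R : Type} [CommMonoid R] {a : R} {m : ℕ}
    (ha : ∀ f : Fin (m + 1) → R, a = ∏ i, f i → ∃ i, IsUnit (f i))
    (l : List R) (hl : ∀ x ∈ l, ¬ IsUnit x) (hd : l.prod ∣ a) : l.length ≤ m := by
  by_contra h
  push_neg at h
  have htake : (l.take (m + 1)).prod ∣ a := by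
    refine dvd_trans ?_ hd
    conv_rhs => rw [← List.take_append_drop (m + 1) l]
    rw [List.prod_append]
    exact dvd_mul_right _ _
  set l' := l.take (m + 1) with hl'
  have hlen : l'.length = m + 1 := by
    simp [hl', List.length_take]
    omega
  obtain ⟨b, hb⟩ := htake
  set g : Fin (m + 1) → R := fun j =>
    (if j = 0 then b else 1) * l'.get ⟨j.val, by rw [hlen]; exact j.2⟩ with hg
  have hgetprod : ∏ j : Fin (m + 1), l'.get ⟨j.val, by rw [hlen]; exact j.2⟩ = l'.prod := by
    rw [← Fin.prod_univ_getElem l']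
    apply Fintype.prod_equiv (finCongr hlen.symm)
    intro x
    rfl
  have hprod : a = ∏ j, g j := by
    rw [hg, Finset.prod_mul_distrib,
      Finset.prod_ite_eq' Finset.univ (0 : Fin (m + 1)) (fun _ => b)]
    simp only [Finset.mem_univ, if_true, Finset.prod_const_one, mul_one]
    rw [hgetprod, mul_comm, hb]
  obtain ⟨j, hj⟩ := ha g hprod
  have hmem : l'.get ⟨j.val, by rw [hlen]; exact j.2⟩ ∈ l :=
    List.take_subset _ _ (List.get_mem _ _)
  exact hl _ hmem (isUnit_of_mul_isUnit_right hj)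

theorem polynomial_bounded_of_bounded
    {R : Type} [CommRing R] [IsDomain R]
    (hR : ∀ a : R, a ≠ 0 → ∃ n : ℕ, ∀ f : Fin (n + 1) → R,
      a = ∏ i, f i → ∃ i, IsUnit (f i)) :
    ∀ p : Polynomial R, p ≠ 0 → ∃ n : ℕ, ∀ f : Fin (n + 1) → Polynomial R,
      p = ∏ i, f i → ∃ i, IsUnit (f i) := by
  intro p hp
  have ha : p.leadingCoeff ≠ 0 := Polynomial.leadingCoeff_ne_zero.2 hp
  obtain ⟨m, hm⟩ := hR p.leadingCoeff ha
  refine ⟨m + p.natDegree, fun f hf => ?_⟩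
  by_contra hcon
  push_neg at hcon
  have hfne : ∀ i, f i ≠ 0 := by
    intro i hi
    apply hp
    rw [hf, Finset.prod_eq_zero (Finset.mem_univ i) hi]
  have hdeg : ∑ i, (f i).natDegree = p.natDegree := by
    conv_rhs => rw [hf]
    rw [Polynomial.natDegree_prod _ _ (fun i _ => hfne i)]
  set T : Finset (Fin (m + p.natDegree + 1)) :=
    Finset.univ.filter (fun i => (f i).natDegree = 0) with hT
  have hScard : (Finset.univ.filter (fun i => ¬ (f i).natDegree = 0)).card ≤ p.natDegree := by
    calc (Finset.univ.filter (fun i => ¬ (f i).natDegree = 0)).card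
        = ∑ i ∈ Finset.univ.filter (fun i => ¬ (f i).natDegree = 0), 1 := by simp
      _ ≤ ∑ i ∈ Finset.univ.filter (fun i => ¬ (f i).natDegree = 0), (f i).natDegree := by
          apply Finset.sum_le_sum; intro i hi; simp only [Finset.mem_filter] at hi; omega
      _ ≤ ∑ i, (f i).natDegree := Finset.sum_le_sum_of_subset (Finset.filter_subset _ _)
      _ = p.natDegree := hdeg
  have hTcard : m + 1 ≤ T.card := by
    have h2 := Finset.card_filter_add_card_filter_not (s := Finset.univ)
      (p := fun i => (f i).natDegree = 0)
    simp only [Finset.card_univ, Fintype.card_fin, ← hT] at h2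
    omega
  set c : Fin (m + p.natDegree + 1) → R := fun i => (f i).coeff 0 with hc
  have hconst : ∀ i ∈ T, f i = Polynomial.C (c i) := by
    intro i hi
    simp only [hT, Finset.mem_filter] at hi
    exact Polynomial.eq_C_of_natDegree_eq_zero hi.2
  have hsplit : p = (Polynomial.C (∏ i ∈ T, c i)) * ∏ i ∈ Tᶜ, f i := by
    rw [map_prod]
    conv_lhs => rw [hf, ← Finset.prod_mul_prod_compl T f]
    congr 1
    exact Finset.prod_congr rfl hconst
  have hdvd : (∏ i ∈ T, c i) ∣ p.leadingCoeff := by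
    have h3 : p.leadingCoeff = (∏ i ∈ T, c i) * (∏ i ∈ Tᶜ, f i).leadingCoeff := by
      conv_lhs => rw [hsplit]
      rw [Polynomial.leadingCoeff_mul, Polynomial.leadingCoeff_C]
    exact ⟨_, h3⟩
  have hkey := bounded_list_aux hm (T.toList.map c) ?_ ?_
  · rw [List.length_map, Finset.length_toList] at hkey
    omega
  · intro x hx
    simp only [List.mem_map, Finset.mem_toList] at hx
    obtain ⟨i, hi, rfl⟩ := hx
    intro hu
    exact hcon i (by rw [hconst i hi]; exact Polynomial.isUnit_C.2 hu)
  · rw [Finset.prod_map_toList]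
    exact hdvd
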